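/- Let a : ℝ → ℝ be continuous, k > 0, and let b : ℝ → ℝ be differentiable with b'(t) = k·ψ(a(t), b(t)) for all t ≥ 0, where ψ(a,b) = a if b > 0 and ψ(a,b) = max(0,a) if b ≤ 0. If b(0) ≥ 0, then b(t) ≥ 0 for all t ≥ 0; i.e., the projected dual dynamics render the nonnegative half-line forward invariant. -/
import Mathlib


/-- The projection nonlinearity of the dual update: `ψ(a,b) = a` if `b > 0`,
and `ψ(a,b) = max 0 a` if `b ≤ 0`. -/
noncomputable def psi (a b : ℝ) : ℝ := if 0 < b then a else max 0 a

/-- **Forward invariance of the nonnegative half-line.** If `a` is continuous, `k > 0`,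
`b` is differentiable with `b'(t) = k·ψ(a(t), b(t))` for all `t ≥ 0`, and `b(0) ≥ 0`,
then `b(t) ≥ 0` for all `t ≥ 0`. -/
theorem dual_nonneg_invariant (a : ℝ → ℝ) (ha : Continuous a) (k : ℝ) (hk : 0 < k)
    (b : ℝ → ℝ) (hb : Differentiable ℝ b)
    (hderiv : ∀ t, 0 ≤ t → deriv b t = k * psi (a t) (b t))
    (h0 : 0 ≤ b 0) :
    ∀ t, 0 ≤ t → 0 ≤ b t := by
  intro t ht
  by_contra hbt
  push_neg at hbt
  set S : Set ℝ := Set.Icc 0 t ∩ {u | 0 ≤ b u} with hS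
  have hSne : S.Nonempty := ⟨0, ⟨le_refl 0, ht⟩, h0⟩
  have hSbdd : BddAbove S := ⟨t, fun u hu => hu.1.2⟩
  have hSclosed : IsClosed S :=
    isClosed_Icc.inter (isClosed_le continuous_const hb.continuous)
  obtain ⟨hsmem, hbs⟩ : sSup S ∈ S := hSclosed.csSup_mem hSne hSbdd
  set s := sSup S with hs
  have hs0 : 0 ≤ s := hsmem.1
  have hst : s ≤ t := hsmem.2
  have hslt : s < t := lt_of_le_of_ne hst fun h => absurd hbs (by rw [h]; exact not_le.2 hbt)
  have hneg : ∀ u, s < u → u ≤ t → b u < 0 := by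
    intro u hsu hut
    by_contra h
    push_neg at h
    have : u ∈ S := ⟨⟨hs0.trans hsu.le, hut⟩, h⟩
    exact absurd (le_csSup hSbdd this) (not_le.2 hsu)
  have hmono : MonotoneOn b (Set.Icc s t) := by
    apply monotoneOn_of_deriv_nonneg (convex_Icc s t) hb.continuous.continuousOn
      (fun u hu => (hb u).differentiableWithinAt)
    intro u hu
    rw [interior_Icc] at hu
    have hu0 : 0 ≤ u := hs0.trans hu.1.le
    have hbu : b u < 0 := hneg u hu.1 hu.2.le
    rw [hderiv u hu0, psi, if_neg (not_lt.2 hbu.le)]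
    exact mul_nonneg hk.le (le_max_left _ _)
  have := hmono (Set.left_mem_Icc.2 hslt.le) (Set.right_mem_Icc.2 hslt.le) hslt.le
  have hbs' : 0 ≤ b s := hbs
  linarith
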